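/- Consider the set of real symmetric 4×4 positive semidefinite matrices X satisfying X₁₁ + 2X₂₃ = 1, X₂₂ = 0, and X₃₃ + 2(X₁₃ + X₁₄) = 0. Then every such X satisfies X₂₃ = 0 and X₁₁ = 1, so the infimum of X₁₁ over this set is 1. -/

import Mathlib

lemma lin_nonneg_forces_zero (a c : ℝ) (h : ∀ t : ℝ, 0 ≤ 2 * t * a + c) : a = 0 := by
  by_contra ha
  have h2 := h (-(c + 1) / (2 * a))
  have : 2 * (-(c + 1) / (2 * a)) * a = -(c + 1) := by field_simp
  linarith

/-- Primal of the singularity-degree-two counter-example: feasibility forces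
`X 1 2 = 0` and `X 0 0 = 1`, hence the infimum of `X 0 0` is `1`. -/
theorem counterexample_primal :
    (∀ X : Matrix (Fin 4) (Fin 4) ℝ, X.PosSemidef →
      X 0 0 + 2 * X 1 2 = 1 → X 1 1 = 0 → X 2 2 + 2 * (X 0 2 + X 0 3) = 0 →
      X 1 2 = 0 ∧ X 0 0 = 1) ∧
    IsLeast {v : ℝ | ∃ X : Matrix (Fin 4) (Fin 4) ℝ, X.PosSemidef ∧
      X 0 0 + 2 * X 1 2 = 1 ∧ X 1 1 = 0 ∧ X 2 2 + 2 * (X 0 2 + X 0 3) = 0 ∧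
      v = X 0 0} 1 := by
  have key : ∀ X : Matrix (Fin 4) (Fin 4) ℝ, X.PosSemidef →
      X 0 0 + 2 * X 1 2 = 1 → X 1 1 = 0 → X 2 2 + 2 * (X 0 2 + X 0 3) = 0 →
      X 1 2 = 0 ∧ X 0 0 = 1 := by
    intro X hX h1 h2 h3
    have hsym : X 2 1 = X 1 2 := by simpa using (hX.1.apply 2 1).symm
    have hq : ∀ t : ℝ, 0 ≤ 2 * t * X 1 2 + X 2 2 := by
      intro t
      have := hX.dotProduct_mulVec_nonneg (![0, t, 1, 0])
      simp [dotProduct, Matrix.mulVec, Fin.sum_univ_four, h2, hsym] at this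
      linarith
    have h12 : X 1 2 = 0 := lin_nonneg_forces_zero _ _ hq
    exact ⟨h12, by linarith⟩
  refine ⟨key, ?_, ?_⟩
  · refine ⟨Matrix.diagonal ![1, 0, 0, 0], Matrix.posSemidef_diagonal_iff.mpr ?_, ?_, ?_, ?_, ?_⟩
    · intro i; fin_cases i <;> norm_num
    all_goals simp [Matrix.diagonal]
  · rintro v ⟨X, hX, h1, h2, h3, rfl⟩
    exact le_of_eq (key X hX h1 h2 h3).2.symm
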